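/- (The σ_1-proposition.) Let w be a finite list of letters, each letter being σ_i or σ_i^{-1} for some i ≥ 1, such that w contains at least one occurrence of σ_1 (positively) and no occurrence of σ_1^{-1}. Then the product of the letters of w in B∞ is not the identity element. -/

import Mathlib

/-- Relators of the infinite braid group `B∞`: commutation `σ_i σ_j = σ_j σ_i` for
`|i - j| > 1` and the braid relation `σ_i σ_j σ_i = σ_j σ_i σ_j` for `|i - j| = 1`. -/
def braidRels : Set (FreeGroup ℕ+) :=
  {r | (∃ i j : ℕ+, (i : ℕ) + 1 < (j : ℕ) ∧
        r = FreeGroup.of i * FreeGroup.of j * (FreeGroup.of i)⁻¹ * (FreeGroup.of j)⁻¹) ∨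
       (∃ i : ℕ+,
        r = FreeGroup.of i * FreeGroup.of (i + 1) * FreeGroup.of i *
            (FreeGroup.of (i + 1))⁻¹ * (FreeGroup.of i)⁻¹ * (FreeGroup.of (i + 1))⁻¹)}

/-- The infinite braid group `B∞`. -/
abbrev Binf : Type := PresentedGroup braidRels

/-- The generator `σ_i` (`i ≥ 1`) of the infinite braid group. -/
def braidGen (i : ℕ+) : Binf := PresentedGroup.of i

/-- The product in `B∞` of a word: a list of letters `(i, ε)`, where `(i, true)`
stands for `σ_i` and `(i, false)` for `σ_i⁻¹`. -/
def braidWordProd (w : List (ℕ+ × Bool)) : Binf :=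
  (w.map fun p => if p.2 then braidGen p.1 else (braidGen p.1)⁻¹).prod


namespace SigmaOneProof
open List



abbrev F : Type := FreeGroup ℕ+
abbrev Ltr : Type := ℕ+ × Bool

/-- No-cancellation relation between adjacent letters. -/
def NR : Ltr → Ltr → Prop := fun x y => ¬(x.1 = y.1 ∧ x.2 = !y.2)

lemma reduce_eq_self {L : List Ltr} (h : L.Chain' NR) : FreeGroup.reduce L = L := by
  induction L with
  | nil => rfl
  | cons x L ih =>
    rw [FreeGroup.reduce.cons, ih h.tail]
    cases L with
    | nil => rfl
    | cons y t =>
      have hxy : NR x y := (List.isChain_cons_cons.mp h).1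
      simp only [if_neg hxy]

lemma chain'_reduce (L : List Ltr) : (FreeGroup.reduce L).Chain' NR := by
  induction L with
  | nil => exact List.isChain_nil
  | cons x L ih =>
    rw [FreeGroup.reduce.cons]
    cases hL : FreeGroup.reduce L with
    | nil => exact List.isChain_singleton _
    | cons y t =>
      rw [hL] at ih
      dsimp only
      by_cases hc : x.1 = y.1 ∧ x.2 = !y.2
      · rw [if_pos hc]; exact ih.tail
      · rw [if_neg hc]; exact List.isChain_cons_cons.mpr ⟨hc, ih⟩

lemma toWord_mk_eq {L : List Ltr} (h : L.Chain' NR) : (FreeGroup.mk L).toWord = L := by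
  rw [FreeGroup.toWord_mk, reduce_eq_self h]

lemma chain'_toWord (g : F) : g.toWord.Chain' NR := by
  rw [← FreeGroup.reduce_toWord]; exact chain'_reduce _

/-- The reduced word of `g` has no letter of index `c`. -/
def NoIdx (c : ℕ+) (g : F) : Prop := ∀ l ∈ g.toWord, l.1 ≠ c

lemma noIdx_one (c : ℕ+) : NoIdx c 1 := by simp [NoIdx, FreeGroup.toWord_one]

lemma noIdx_mul {c : ℕ+} {g h : F} (hg : NoIdx c g) (hh : NoIdx c h) : NoIdx c (g * h) := by
  intro l hl
  have := (FreeGroup.toWord_mul_sublist g h).subset hl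
  rcases List.mem_append.mp this with h1 | h1
  exacts [hg _ h1, hh _ h1]

lemma noIdx_inv {c : ℕ+} {g : F} (hg : NoIdx c g) : NoIdx c g⁻¹ := by
  intro l hl
  rw [FreeGroup.toWord_inv, FreeGroup.invRev] at hl
  simp only [List.mem_reverse, List.mem_map] at hl
  obtain ⟨a, ha, rfl⟩ := hl
  exact hg a ha

lemma mk_singleton (l : Ltr) : FreeGroup.mk [l] = (FreeGroup.of l.1) ^ (if l.2 then (1:ℤ) else -1) := by
  obtain ⟨a, b⟩ := l
  cases b <;> simp [FreeGroup.of, FreeGroup.inv_mk, FreeGroup.invRev]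
lemma mk_cons (l : Ltr) (L : List Ltr) : FreeGroup.mk (l :: L) = FreeGroup.mk [l] * FreeGroup.mk L := by
  rw [FreeGroup.mul_mk]; rfl

lemma mk_single_true (j : ℕ+) : FreeGroup.mk [(j, true)] = FreeGroup.of j := rfl

lemma mk_single_false (j : ℕ+) : FreeGroup.mk [(j, false)] = (FreeGroup.of j)⁻¹ := by
  rw [show FreeGroup.of j = FreeGroup.mk [(j, true)] from rfl, FreeGroup.inv_mk]
  rfl

lemma noIdx_map_mk {Φ : F →* F} {c : ℕ+} (hj : ∀ j : ℕ+, j ≠ 1 → NoIdx c (Φ (FreeGroup.of j)))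
    {V : List Ltr} (hV : ∀ l ∈ V, l.1 ≠ 1) : NoIdx c (Φ (FreeGroup.mk V)) := by
  induction V with
  | nil =>
    rw [show FreeGroup.mk ([] : List Ltr) = 1 from rfl, map_one]
    exact noIdx_one c
  | cons l V ih =>
    rw [mk_cons, map_mul]
    refine noIdx_mul ?_ (ih fun l hl => hV l (List.mem_cons_of_mem _ hl))
    have h1 : l.1 ≠ 1 := hV l (List.mem_cons_self)
    obtain ⟨j, b⟩ := l
    cases b
    · rw [mk_single_false, map_inv]; exact noIdx_inv (hj j h1)
    · rw [mk_single_true]; exact hj j h1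

lemma mem_of_getLast?' {α : Type*} {l : List α} {a : α} (h : l.getLast? = some a) : a ∈ l := by
  rcases List.getLast?_eq_some_iff.mp h with ⟨ys, rfl⟩; simp

lemma dropWhile_head?_false {α : Type*} (p : α → Bool) :
    ∀ (L : List α) (y : α), (L.dropWhile p).head? = some y → p y = false := by
  intro L
  induction L with
  | nil => intro y h; simp at h
  | cons a t ih =>
    intro y h
    rw [List.dropWhile_cons] at h
    by_cases hp : p a = true
    · rw [if_pos hp] at h; exact ih y h
    · rw [if_neg hp] at h
      simp only [List.head?_cons, Option.some.injEq] at h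
      subst h; simpa using hp

/-- Master block lemma (Larue): if `Φ` sends `x₁` to the single generator `x_c` and every
other generator into the subgroup avoiding index `c`, then the reduced word of `Φ g` tracks
the index-1 letters at the two ends of the reduced word of `g`. -/
lemma master (Φ : F →* F) (c : ℕ+) (hinj : Function.Injective Φ)
    (h1 : Φ (FreeGroup.of 1) = FreeGroup.of c)
    (hj : ∀ j : ℕ+, j ≠ 1 → NoIdx c (Φ (FreeGroup.of j))) :
    ∀ n (W : List Ltr), W.length ≤ n → W.Chain' NR →
    ∃ M : List Ltr, Φ (FreeGroup.mk W) = FreeGroup.mk M ∧ M.Chain' NR ∧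
      (M = [] ↔ W = []) ∧
      (∀ b, W.head? = some (1, b) → M.head? = some (c, b)) ∧
      (∀ j b, j ≠ 1 → W.head? = some (j, b) → ∀ l ∈ M.head?, l.1 ≠ c) ∧
      (∀ b, W.getLast? = some (1, b) → M.getLast? = some (c, b)) ∧
      (∀ j b, j ≠ 1 → W.getLast? = some (j, b) → ∀ l ∈ M.getLast?, l.1 ≠ c) := by
  intro n
  induction n with
  | zero =>
    intro W hlen _
    have : W = [] := List.length_eq_zero_iff.mp (Nat.le_zero.mp hlen)
    subst this
    exact ⟨[], by rw [show FreeGroup.mk ([] : List Ltr) = 1 from rfl, _root_.map_one], List.isChain_nil,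
      by simp, by simp, by simp, by simp, by simp⟩
  | succ n IH =>
    intro W hlen hW
    cases hWc : W with
    | nil =>
      exact ⟨[], by rw [show FreeGroup.mk ([] : List Ltr) = 1 from rfl, _root_.map_one], List.isChain_nil,
        by simp, by simp, by simp, by simp, by simp⟩
    | cons x W' =>
      subst hWc
      obtain ⟨j₀, b₀⟩ := x
      by_cases hj₀ : j₀ = 1
      · -- head letter has index 1
        subst hj₀
        obtain ⟨M', hprod', hchain', hemp', hh1', hhj', hl1', hlj'⟩ :=
          IH W' (Nat.le_of_succ_le_succ hlen) hW.tail
        have hsingle : Φ (FreeGroup.mk [((1:ℕ+), b₀)]) = FreeGroup.mk [(c, b₀)] := by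
          cases b₀
          · rw [mk_single_false, _root_.map_inv, h1, ← mk_single_false]
          · rw [mk_single_true, h1, ← mk_single_true]
        refine ⟨(c, b₀) :: M', ?_, ?_, ?_, ?_, ?_, ?_, ?_⟩
        · rw [mk_cons, _root_.map_mul, hsingle, hprod', ← mk_cons]
        · refine List.isChain_cons.mpr ⟨?_, hchain'⟩
          intro y hy
          cases hW' : W' with
          | nil => subst hW'; simp [hemp'.mpr rfl] at hy
          | cons w t =>
            subst hW'
            obtain ⟨j₁, b₁⟩ := w
            by_cases hj₁ : j₁ = 1
            · subst hj₁
              have := hh1' b₁ rfl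
              rw [this] at hy
              have hy' : (c, b₁) = y := by simpa using hy
              subst hy'
              have hnr : NR ((1:ℕ+), b₀) ((1:ℕ+), b₁) := (List.isChain_cons_cons.mp hW).1
              intro hcon
              exact hnr ⟨rfl, hcon.2⟩
            · have := hhj' j₁ b₁ hj₁ rfl y hy
              intro hcon
              exact this hcon.1.symm
        · constructor
          · intro h; simp at h
          · intro h; simp at h
        · intro b hb
          simp only [List.head?_cons, Option.some.injEq] at hb ⊢
          rw [(Prod.mk.injEq _ _ _ _).mp hb |>.2]
        · intro j b hjne hb
          simp only [List.head?_cons, Option.some.injEq] at hb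
          exact absurd ((Prod.mk.injEq _ _ _ _).mp hb).1.symm hjne
        · intro b hb
          cases hW' : W' with
          | nil =>
            subst hW'
            have hM' : M' = [] := hemp'.mpr rfl
            subst hM'
            simp only [List.getLast?_singleton, Option.some.injEq] at hb ⊢
            rw [(Prod.mk.injEq _ _ _ _).mp hb |>.2]
          | cons w t =>
            subst hW'
            rw [List.getLast?_cons_cons] at hb
            have hM'ne : M' ≠ [] := fun h => by simp [hemp'.mp h] at *
            cases hM'c : M' with
            | nil => exact absurd hM'c hM'ne
            | cons m mt =>
              rw [List.getLast?_cons_cons]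
              rw [hM'c] at hl1'
              exact hl1' b hb
        · intro j b hjne hb
          cases hW' : W' with
          | nil =>
            subst hW'
            simp only [List.getLast?_singleton, Option.some.injEq] at hb
            exact absurd ((Prod.mk.injEq _ _ _ _).mp hb).1.symm hjne
          | cons w t =>
            subst hW'
            rw [List.getLast?_cons_cons] at hb
            cases hM'c : M' with
            | nil => exact absurd (hemp'.mp hM'c) (by simp)
            | cons m mt =>
              rw [List.getLast?_cons_cons]
              rw [hM'c] at hlj'
              exact hlj' j b hjne hb
      · -- head letter has index ≠ 1 : split off the maximal block
        set p : Ltr → Bool := fun l => decide (l.1 ≠ 1) with hp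
        set V := List.takeWhile p ((j₀, b₀) :: W') with hV
        set W₂ := List.dropWhile p ((j₀, b₀) :: W') with hW₂
        have hpx : p (j₀, b₀) = true := by simp [hp, hj₀]
        have hVW : V ++ W₂ = (j₀, b₀) :: W' := List.takeWhile_append_dropWhile ..
        have hVcons : V = (j₀, b₀) :: List.takeWhile p W' := by
          rw [hV, List.takeWhile_cons_of_pos hpx]
        have hVne : V ≠ [] := by rw [hVcons]; simp
        have hlen2 : W₂.length ≤ n := by
          have := congrArg List.length hVW
          rw [List.length_append] at this
          have hV1 : 1 ≤ V.length := by
            rw [hVcons]; simp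
          simp only [List.length_cons] at this hlen
          omega
        have hchains := List.isChain_append.mp (hVW ▸ hW)
        obtain ⟨hcV, hcW₂, hjunc⟩ := hchains
        have hVmem : ∀ l ∈ V, l.1 ≠ 1 := fun l hl => by
          have := List.mem_takeWhile_imp hl
          simpa [hp] using this
        obtain ⟨M₂, hprod₂, hchain₂, hemp₂, hh1₂, hhj₂, hl1₂, hlj₂⟩ := IH W₂ hlen2 hcW₂
        have hmkVne : FreeGroup.mk V ≠ 1 := by
          intro h
          have := toWord_mk_eq hcV
          rw [h, FreeGroup.toWord_one] at this
          exact hVne this.symm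
        have hΦVne : Φ (FreeGroup.mk V) ≠ 1 := by
          intro h
          exact hmkVne (hinj (by rw [h, _root_.map_one]))
        set U := (Φ (FreeGroup.mk V)).toWord with hU
        have hUmk : FreeGroup.mk U = Φ (FreeGroup.mk V) := FreeGroup.mk_toWord
        have hUne : U ≠ [] := fun h => hΦVne (FreeGroup.toWord_eq_nil_iff.mp h)
        have hUc : ∀ l ∈ U, l.1 ≠ c := noIdx_map_mk hj hVmem
        have hUchain : U.Chain' NR := chain'_toWord _
        have hW₂head : ∀ y, W₂.head? = some y → y.1 = 1 := by
          intro y hy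
          have := dropWhile_head?_false p _ y hy
          simpa [hp] using this
        refine ⟨U ++ M₂, ?_, ?_, ?_, ?_, ?_, ?_, ?_⟩
        · rw [← hVW, ← FreeGroup.mul_mk, _root_.map_mul, hprod₂, ← hUmk, FreeGroup.mul_mk]
        · refine List.isChain_append.mpr ⟨hUchain, hchain₂, ?_⟩
          intro xl hxl y hy
          have hxc : xl.1 ≠ c := hUc xl (mem_of_getLast?' hxl)
          cases hW₂c : W₂ with
          | nil =>
            rw [hemp₂.mpr hW₂c] at hy
            simp at hy
          | cons w2 t2 =>
            obtain ⟨w21, w22⟩ := w2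
            have hw1 : w21 = 1 := hW₂head _ (by rw [hW₂c]; rfl)
            subst hw1
            have hh : M₂.head? = some (c, w22) := hh1₂ w22 (by rw [hW₂c]; rfl)
            rw [hh] at hy
            have hy' : (c, w22) = y := by simpa using hy
            subst hy'
            intro hcon
            exact hxc hcon.1
        · constructor
          · intro h
            exact absurd (List.append_eq_nil_iff.mp h).1 hUne
          · intro h; simp at h
        · intro b hb
          simp only [List.head?_cons, Option.some.injEq] at hb
          exact absurd ((Prod.mk.injEq _ _ _ _).mp hb).1 hj₀
        · intro j b _ _ l hl
          rw [List.head?_append_of_ne_nil U hUne] at hl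
          exact hUc l (List.mem_of_mem_head? hl)
        · -- getLast, index-1 rule
          intro b hb
          cases hW₂c : W₂ with
          | nil =>
            exfalso
            have hWV : (j₀, b₀) :: W' = V := by rw [← hVW, hW₂c, List.append_nil]
            have := hVmem _ (mem_of_getLast?' (hWV ▸ hb))
            exact this rfl
          | cons w2 t2 =>
            have hW₂gl : ∃ z, W₂.getLast? = some z := by
              rw [hW₂c]
              exact ⟨(w2 :: t2).getLast (by simp), List.getLast?_eq_getLast _⟩
            obtain ⟨z, hz⟩ := hW₂gl
            have hbW₂ : W₂.getLast? = some (1, b) := by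
              rw [← hVW, List.getLast?_append, hz] at hb
              simpa [hz] using hb
            have hM₂gl := hl1₂ b hbW₂
            rw [List.getLast?_append, hM₂gl]
            rfl
        · -- getLast, other-index rule
          intro j b hjne hb
          cases hW₂c : W₂ with
          | nil =>
            have hM₂nil : M₂ = [] := hemp₂.mpr hW₂c
            intro l hl
            rw [hM₂nil, List.append_nil] at hl
            exact hUc l (mem_of_getLast?' hl)
          | cons w2 t2 =>
            have hW₂gl : ∃ z, W₂.getLast? = some z := by
              rw [hW₂c]
              exact ⟨(w2 :: t2).getLast (by simp), List.getLast?_eq_getLast _⟩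
            obtain ⟨z, hz⟩ := hW₂gl
            have hbW₂ : W₂.getLast? = some (j, b) := by
              rw [← hVW, List.getLast?_append, hz] at hb
              simpa [hz] using hb
            intro l hl
            have hM₂gl : ∃ z2, M₂.getLast? = some z2 := by
              have hM₂ne : M₂ ≠ [] := fun h => by
                rw [hemp₂.mp h] at hW₂c
                exact absurd hW₂c (by simp)
              cases hc2 : M₂ with
              | nil => exact absurd hc2 hM₂ne
              | cons m mt => exact ⟨(m :: mt).getLast (by simp), List.getLast?_eq_getLast _⟩
            obtain ⟨z2, hz2⟩ := hM₂gl
            rw [List.getLast?_append, hz2] at hl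
            have hl' : z2 = l := by simpa using hl
            subst hl'
            exact hlj₂ j b hjne hbW₂ z2 hz2
lemma pne {a b : ℕ+} (h : (a:ℕ) ≠ (b:ℕ)) : a ≠ b := fun e => h (by rw [e])

lemma ne_succ (i : ℕ+) : i ≠ i + 1 := pne (by simp only [PNat.add_coe, PNat.one_coe]; omega)
lemma succ_ne (i : ℕ+) : i + 1 ≠ i := (ne_succ i).symm
lemma ne_succ_succ (i : ℕ+) : i ≠ i + 1 + 1 :=
  pne (by simp only [PNat.add_coe, PNat.one_coe]; omega)
lemma succ_succ_ne (i : ℕ+) : i + 1 + 1 ≠ i := (ne_succ_succ i).symm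

/-- letter images for the Artin automorphism `σ_i`. -/
def artinMap (i : ℕ+) : ℕ+ → F := fun k =>
  if k = i then FreeGroup.of i * FreeGroup.of (i+1) * (FreeGroup.of i)⁻¹
  else if k = i + 1 then FreeGroup.of i
  else FreeGroup.of k

/-- letter images for the inverse Artin automorphism `σ_i⁻¹`. -/
def artinInvMap (i : ℕ+) : ℕ+ → F := fun k =>
  if k = i then FreeGroup.of (i+1)
  else if k = i + 1 then (FreeGroup.of (i+1))⁻¹ * FreeGroup.of i * FreeGroup.of (i+1)
  else FreeGroup.of k

def A (i : ℕ+) : F →* F := FreeGroup.lift (artinMap i)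
def B (i : ℕ+) : F →* F := FreeGroup.lift (artinInvMap i)

lemma A_self (i : ℕ+) :
    A i (FreeGroup.of i) = FreeGroup.of i * FreeGroup.of (i+1) * (FreeGroup.of i)⁻¹ := by
  simp [A, artinMap, FreeGroup.lift_apply_of]

lemma A_next (i : ℕ+) : A i (FreeGroup.of (i+1)) = FreeGroup.of i := by
  simp [A, artinMap, FreeGroup.lift_apply_of, succ_ne i]

lemma A_other (i k : ℕ+) (h1 : k ≠ i) (h2 : k ≠ i + 1) : A i (FreeGroup.of k) = FreeGroup.of k := by
  simp [A, artinMap, FreeGroup.lift_apply_of, h1, h2]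

lemma B_self (i : ℕ+) : B i (FreeGroup.of i) = FreeGroup.of (i+1) := by
  simp [B, artinInvMap, FreeGroup.lift_apply_of]

lemma B_next (i : ℕ+) :
    B i (FreeGroup.of (i+1)) = (FreeGroup.of (i+1))⁻¹ * FreeGroup.of i * FreeGroup.of (i+1) := by
  simp [B, artinInvMap, FreeGroup.lift_apply_of, succ_ne i]

lemma B_other (i k : ℕ+) (h1 : k ≠ i) (h2 : k ≠ i + 1) : B i (FreeGroup.of k) = FreeGroup.of k := by
  simp [B, artinInvMap, FreeGroup.lift_apply_of, h1, h2]

lemma BA (i : ℕ+) : (B i).comp (A i) = MonoidHom.id F := by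
  apply FreeGroup.ext_hom
  intro k
  simp only [MonoidHom.comp_apply, MonoidHom.id_apply]
  by_cases h1 : k = i
  · subst h1
    rw [A_self, map_mul, map_mul, map_inv, B_self, B_next]
    group
  · by_cases h2 : k = i + 1
    · subst h2
      rw [A_next, B_self]
    · rw [A_other i k h1 h2, B_other i k h1 h2]

lemma AB (i : ℕ+) : (A i).comp (B i) = MonoidHom.id F := by
  apply FreeGroup.ext_hom
  intro k
  simp only [MonoidHom.comp_apply, MonoidHom.id_apply]
  by_cases h1 : k = i
  · subst h1
    rw [B_self, A_next]
  · by_cases h2 : k = i + 1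
    · subst h2
      rw [B_next, map_mul, map_mul, map_inv, A_next, A_self]
      group
    · rw [B_other i k h1 h2, A_other i k h1 h2]

/-- the Artin automorphism as an element of `MulAut F`. -/
def E (i : ℕ+) : MulAut F := MonoidHom.toMulEquiv (A i) (B i) (BA i) (AB i)

lemma E_apply (i : ℕ+) (g : F) : E i g = A i g := rfl
lemma E_inv_apply (i : ℕ+) (g : F) : (E i)⁻¹ g = B i g := rfl

lemma A_comm (i j : ℕ+) (hij : (i:ℕ) + 1 < (j:ℕ)) (g : F) : A i (A j g) = A j (A i g) := by
  have hji : i ≠ j := pne (by omega)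
  have hij1 : i ≠ j + 1 := pne (by simp only [PNat.add_coe, PNat.one_coe]; omega)
  have hi1j : i + 1 ≠ j := pne (by simp only [PNat.add_coe, PNat.one_coe]; omega)
  have hi1j1 : i + 1 ≠ j + 1 := pne (by simp only [PNat.add_coe, PNat.one_coe]; omega)
  have key : (A i).comp (A j) = (A j).comp (A i) := by
    apply FreeGroup.ext_hom
    intro k
    simp only [MonoidHom.comp_apply]
    by_cases h1 : k = j
    · simp only [h1, map_mul, map_inv, A_self, A_next, A_other i j hji.symm hi1j.symm,
        A_other i (j+1) hij1.symm hi1j1.symm, A_other j i hji hij1, A_other j (i+1) hi1j hi1j1]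
    · by_cases h2 : k = j + 1
      · simp only [h2, map_mul, map_inv, A_self, A_next, A_other i j hji.symm hi1j.symm,
          A_other i (j+1) hij1.symm hi1j1.symm, A_other j i hji hij1, A_other j (i+1) hi1j hi1j1]
      · by_cases h3 : k = i
        · simp only [h3, map_mul, map_inv, A_self, A_next, A_other i j hji.symm hi1j.symm,
            A_other i (j+1) hij1.symm hi1j1.symm, A_other j i hji hij1,
            A_other j (i+1) hi1j hi1j1]
        · by_cases h4 : k = i + 1
          · simp only [h4, map_mul, map_inv, A_self, A_next, A_other i j hji.symm hi1j.symm,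
              A_other i (j+1) hij1.symm hi1j1.symm, A_other j i hji hij1,
              A_other j (i+1) hi1j hi1j1]
          · simp only [A_other i k h3 h4, A_other j k h1 h2]
  exact DFunLike.congr_fun key g

lemma A_braid (i : ℕ+) (g : F) : A i (A (i+1) (A i g)) = A (i+1) (A i (A (i+1) g)) := by
  have h1 : i ≠ i + 1 := ne_succ i
  have h2 : i ≠ i + 1 + 1 := ne_succ_succ i
  have h3 : i + 1 ≠ i + 1 + 1 := ne_succ (i+1)
  have key : (A i).comp ((A (i+1)).comp (A i)) = (A (i+1)).comp ((A i).comp (A (i+1))) := by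
    apply FreeGroup.ext_hom
    intro k
    simp only [MonoidHom.comp_apply]
    by_cases hk1 : k = i
    · simp only [hk1, map_mul, map_inv, A_self, A_next, A_other (i+1) i h1 h2,
        A_other i (i+1+1) h2.symm h3.symm]
      group
    · by_cases hk2 : k = i + 1
      · simp only [hk2, map_mul, map_inv, A_self, A_next, A_other (i+1) i h1 h2,
          A_other i (i+1+1) h2.symm h3.symm]
      · by_cases hk3 : k = i + 1 + 1
        · simp only [hk3, map_mul, map_inv, A_self, A_next, A_other (i+1) i h1 h2,
            A_other i (i+1+1) h2.symm h3.symm]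
        · simp only [A_other i k hk1 hk2, A_other (i+1) k hk2 hk3]
  exact DFunLike.congr_fun key g

lemma E_comm (i j : ℕ+) (hij : (i:ℕ) + 1 < (j:ℕ)) : E i * E j = E j * E i := by
  apply MulEquiv.ext
  intro g
  simp only [MulAut.mul_apply, E_apply]
  exact A_comm i j hij g

lemma E_braid (i : ℕ+) : E i * E (i+1) * E i = E (i+1) * E i * E (i+1) := by
  apply MulEquiv.ext
  intro g
  simp only [MulAut.mul_apply, E_apply]
  exact A_braid i g

/-! ### The auxiliary map `D` with `A 1 = conj(x₁) ∘ D` -/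

def dMap : ℕ+ → F := fun k =>
  if k = 1 then FreeGroup.of 2
  else if k = 2 then FreeGroup.of 1
  else (FreeGroup.of 1)⁻¹ * FreeGroup.of k * FreeGroup.of 1

def dInvMap : ℕ+ → F := fun k =>
  if k = 1 then FreeGroup.of 2
  else if k = 2 then FreeGroup.of 1
  else FreeGroup.of 2 * FreeGroup.of k * (FreeGroup.of 2)⁻¹

def D : F →* F := FreeGroup.lift dMap
def Dinv : F →* F := FreeGroup.lift dInvMap

lemma one_ne_two : (1 : ℕ+) ≠ 2 := by decide
lemma two_ne_one : (2 : ℕ+) ≠ 1 := by decide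
lemma one_add_one : (1 : ℕ+) + 1 = 2 := rfl

lemma D_one : D (FreeGroup.of 1) = FreeGroup.of 2 := by simp [D, dMap, FreeGroup.lift_apply_of]
lemma D_two : D (FreeGroup.of 2) = FreeGroup.of 1 := by
  simp [D, dMap, FreeGroup.lift_apply_of, two_ne_one]
lemma D_other (k : ℕ+) (h1 : k ≠ 1) (h2 : k ≠ 2) :
    D (FreeGroup.of k) = (FreeGroup.of 1)⁻¹ * FreeGroup.of k * FreeGroup.of 1 := by
  simp [D, dMap, FreeGroup.lift_apply_of, h1, h2]
lemma Dinv_one : Dinv (FreeGroup.of 1) = FreeGroup.of 2 := by simp [Dinv, dInvMap, FreeGroup.lift_apply_of]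
lemma Dinv_two : Dinv (FreeGroup.of 2) = FreeGroup.of 1 := by
  simp [Dinv, dInvMap, FreeGroup.lift_apply_of, two_ne_one]
lemma Dinv_other (k : ℕ+) (h1 : k ≠ 1) (h2 : k ≠ 2) :
    Dinv (FreeGroup.of k) = FreeGroup.of 2 * FreeGroup.of k * (FreeGroup.of 2)⁻¹ := by
  simp [Dinv, dInvMap, FreeGroup.lift_apply_of, h1, h2]

lemma DinvD : Dinv.comp D = MonoidHom.id F := by
  apply FreeGroup.ext_hom
  intro k
  simp only [MonoidHom.comp_apply, MonoidHom.id_apply]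
  by_cases h1 : k = 1
  · simp only [h1, D_one, Dinv_two]
  · by_cases h2 : k = 2
    · simp only [h2, D_two, Dinv_one]
    · rw [D_other k h1 h2, map_mul, map_mul, map_inv, Dinv_one, Dinv_other k h1 h2]
      group

lemma D_inj : Function.Injective D := by
  have li : ∀ x, Dinv (D x) = x := fun x => DFunLike.congr_fun DinvD x
  exact Function.LeftInverse.injective li

lemma a1_eq (g : F) : A 1 g = FreeGroup.of 1 * D g * (FreeGroup.of 1)⁻¹ := by
  have key : A 1 = ((MulAut.conj (FreeGroup.of (1:ℕ+))).toMonoidHom).comp D := by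
    apply FreeGroup.ext_hom
    intro k
    simp only [MonoidHom.comp_apply, MulEquiv.coe_toMonoidHom, MulAut.conj_apply]
    by_cases h1 : k = 1
    · simp only [h1, D_one, A_self, one_add_one]
    · by_cases h2 : k = 2
      · simp only [h2, D_two]
        have : A 1 (FreeGroup.of (2:ℕ+)) = FreeGroup.of (1:ℕ+) := by
          rw [← one_add_one, A_next]
        rw [this]
        group
      · have h2' : k ≠ (1:ℕ+) + 1 := by rw [one_add_one]; exact h2
        rw [A_other 1 k h1 h2', D_other k h1 h2]
        group
  rw [key]
  rfl

/-! ### The positivity invariant -/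

def Pos (g : F) : Prop :=
  g.toWord.head? = some (1, true) ∧ g.toWord.getLast? = some (1, false)

/-- Consequence of the master lemma, at the level of group elements. -/
lemma track (Φ : F →* F) (c : ℕ+) (hinj : Function.Injective Φ)
    (h1 : Φ (FreeGroup.of 1) = FreeGroup.of c)
    (hj : ∀ j : ℕ+, j ≠ 1 → NoIdx c (Φ (FreeGroup.of j))) {g : F} (hg : Pos g) :
    (Φ g).toWord.head? = some (c, true) ∧ (Φ g).toWord.getLast? = some (c, false) := by
  obtain ⟨M, hprod, hchain, _, hh1, _, hl1, _⟩ :=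
    master Φ c hinj h1 hj g.toWord.length g.toWord le_rfl (chain'_toWord g)
  rw [FreeGroup.mk_toWord] at hprod
  have hM : (Φ g).toWord = M := by rw [hprod, toWord_mk_eq hchain]
  rw [hM]
  exact ⟨hh1 true hg.1, hl1 false hg.2⟩

lemma noIdx_of {c j : ℕ+} (h : j ≠ c) : NoIdx c (FreeGroup.of j) := by
  intro l hl
  rw [FreeGroup.toWord_of] at hl
  simp at hl
  subst hl
  exact h

lemma noIdx_three (c x y z : ℕ+) (bx byy bz : Bool) (hx : x ≠ c) (hy : y ≠ c) (hz : z ≠ c)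
    (hchain : List.Chain' NR [(x, bx), (y, byy), (z, bz)]) :
    NoIdx c (FreeGroup.mk [(x, bx), (y, byy), (z, bz)]) := by
  intro l hl
  rw [toWord_mk_eq hchain] at hl
  simp only [List.mem_cons, List.not_mem_nil, or_false] at hl
  rcases hl with rfl | rfl | rfl
  exacts [hx, hy, hz]

lemma word_aba (i : ℕ+) :
    FreeGroup.of i * FreeGroup.of (i+1) * (FreeGroup.of i)⁻¹ =
      FreeGroup.mk [(i, true), (i+1, true), (i, false)] := by
  rw [← mk_single_false i, ← mk_single_true (i+1), ← mk_single_true i,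
    FreeGroup.mul_mk, FreeGroup.mul_mk]
  rfl

lemma word_bab (i : ℕ+) :
    (FreeGroup.of (i+1))⁻¹ * FreeGroup.of i * FreeGroup.of (i+1) =
      FreeGroup.mk [(i+1, false), (i, true), (i+1, true)] := by
  rw [← mk_single_false (i+1), ← mk_single_true i, ← mk_single_true (i+1),
    FreeGroup.mul_mk, FreeGroup.mul_mk]
  rfl

lemma word_cac : ∀ k : ℕ+, k ≠ 1 →
    (FreeGroup.of 1)⁻¹ * FreeGroup.of k * FreeGroup.of 1 =
      FreeGroup.mk [(1, false), (k, true), (1, true)] := by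
  intro k _
  rw [← mk_single_false 1, ← mk_single_true k, ← mk_single_true 1,
    FreeGroup.mul_mk, FreeGroup.mul_mk]
  rfl

lemma chain3 {x y z : Ltr} (h1 : x.1 ≠ y.1) (h2 : y.1 ≠ z.1) :
    List.Chain' NR [x, y, z] := by
  refine List.isChain_cons_cons.mpr ⟨fun h => h1 h.1, ?_⟩
  exact List.isChain_cons_cons.mpr ⟨fun h => h2 h.1, List.isChain_singleton _⟩

lemma one_ne_succ (i : ℕ+) : (1:ℕ+) ≠ i + 1 :=
  pne (by simp only [PNat.add_coe, PNat.one_coe]; have := i.pos; omega)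

/-- Conditions of the master lemma for `A i`, `i ≠ 1`, with `c = 1`. -/
lemma A_track (i : ℕ+) (hi : i ≠ 1) {g : F} (hg : Pos g) : Pos (A i g) := by
  have hinj : Function.Injective (A i) := by
    have li : ∀ x, B i (A i x) = x := fun x => DFunLike.congr_fun (BA i) x
    exact Function.LeftInverse.injective li
  have h1 : A i (FreeGroup.of 1) = FreeGroup.of 1 := A_other i 1 hi.symm (one_ne_succ i)
  have hj : ∀ j : ℕ+, j ≠ 1 → NoIdx 1 (A i (FreeGroup.of j)) := by
    intro j hjne
    by_cases hji : j = i
    · rw [hji, A_self, word_aba]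
      exact noIdx_three 1 i (i+1) i true true false hi (one_ne_succ i).symm hi
        (chain3 (ne_succ i) (succ_ne i))
    · by_cases hji1 : j = i + 1
      · rw [hji1, A_next]
        exact noIdx_of hi
      · rw [A_other i j hji hji1]
        exact noIdx_of hjne
  exact track (A i) 1 hinj h1 hj hg

/-- Conditions of the master lemma for `B i`, `i ≠ 1`, with `c = 1`. -/
lemma B_track (i : ℕ+) (hi : i ≠ 1) {g : F} (hg : Pos g) : Pos (B i g) := by
  have hinj : Function.Injective (B i) := by
    have li : ∀ x, A i (B i x) = x := fun x => DFunLike.congr_fun (AB i) x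
    exact Function.LeftInverse.injective li
  have h1 : B i (FreeGroup.of 1) = FreeGroup.of 1 := B_other i 1 hi.symm (one_ne_succ i)
  have hj : ∀ j : ℕ+, j ≠ 1 → NoIdx 1 (B i (FreeGroup.of j)) := by
    intro j hjne
    by_cases hji : j = i
    · rw [hji, B_self]
      exact noIdx_of (one_ne_succ i).symm
    · by_cases hji1 : j = i + 1
      · rw [hji1, B_next, word_bab]
        exact noIdx_three 1 (i+1) i (i+1) false true true (one_ne_succ i).symm hi
          (one_ne_succ i).symm (chain3 (succ_ne i) (ne_succ i))
      · rw [B_other i j hji hji1]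
        exact noIdx_of hjne
  exact track (B i) 1 hinj h1 hj hg

/-- `A i` and `B i` fix `x₁` for `i ≠ 1`. -/
lemma A_fix (i : ℕ+) (hi : i ≠ 1) : A i (FreeGroup.of 1) = FreeGroup.of 1 :=
  A_other i 1 hi.symm (one_ne_succ i)
lemma B_fix (i : ℕ+) (hi : i ≠ 1) : B i (FreeGroup.of 1) = FreeGroup.of 1 :=
  B_other i 1 hi.symm (one_ne_succ i)

/-- The sandwich lemma: conjugating an element whose reduced word starts and ends away
from index 1 by `x₁` gives a `Pos` element. -/
lemma sandwich {h : F} {c₁ c₂ : ℕ+} {b₁ b₂ : Bool} (hc₁ : c₁ ≠ 1) (hc₂ : c₂ ≠ 1)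
    (hh : h.toWord.head? = some (c₁, b₁)) (hl : h.toWord.getLast? = some (c₂, b₂)) :
    Pos (FreeGroup.of 1 * h * (FreeGroup.of 1)⁻¹) := by
  set U := h.toWord with hU
  have hUne : U ≠ [] := by
    intro hnil
    rw [hnil] at hh
    simp at hh
  have hchain : List.Chain' NR (((1:ℕ+), true) :: (U ++ [((1:ℕ+), false)])) := by
    refine List.isChain_cons.mpr ⟨?_, ?_⟩
    · intro y hy
      rw [List.head?_append_of_ne_nil U hUne, hh] at hy
      have : (c₁, b₁) = y := by simpa using hy
      subst this
      exact fun hcon => hc₁ hcon.1.symm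
    · refine List.isChain_append.mpr ⟨chain'_toWord h, List.isChain_singleton _, ?_⟩
      intro x hx y hy
      rw [hl] at hx
      have hx' : (c₂, b₂) = x := by simpa using hx
      subst hx'
      have hy' : ((1:ℕ+), false) = y := by simpa using hy
      subst hy'
      exact fun hcon => hc₂ hcon.1
  have hmk : FreeGroup.mk (((1:ℕ+), true) :: (U ++ [((1:ℕ+), false)]))
      = FreeGroup.of 1 * h * (FreeGroup.of 1)⁻¹ := by
    rw [mk_cons, ← FreeGroup.mul_mk, mk_single_true, mk_single_false, ← mul_assoc]
    rw [hU, FreeGroup.mk_toWord]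
  have hword : (FreeGroup.of 1 * h * (FreeGroup.of 1)⁻¹).toWord
      = ((1:ℕ+), true) :: (U ++ [((1:ℕ+), false)]) := by
    rw [← hmk, toWord_mk_eq hchain]
  constructor
  · rw [hword]; rfl
  · rw [hword]
    rw [show (((1:ℕ+), true) :: (U ++ [((1:ℕ+), false)]))
        = ((((1:ℕ+), true) :: U) ++ [((1:ℕ+), false)]) from rfl]
    rw [List.getLast?_concat]

/-- Larue's key step: applying `A 1` preserves positivity, and creates it from `x₁`. -/
lemma A1_track {g : F} (hg : Pos g) : Pos (A 1 g) := by
  have hinj : Function.Injective D := D_inj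
  have hj : ∀ j : ℕ+, j ≠ 1 → NoIdx 2 (D (FreeGroup.of j)) := by
    intro j hjne
    by_cases hj2 : j = 2
    · rw [hj2, D_two]
      exact noIdx_of one_ne_two
    · rw [D_other j hjne hj2, word_cac j hjne]
      exact noIdx_three 2 1 j 1 false true true one_ne_two hj2 one_ne_two
        (chain3 (fun h => hjne h.symm) hjne)
  obtain ⟨hh, hl⟩ := track D 2 hinj D_one hj hg
  rw [a1_eq]
  exact sandwich two_ne_one two_ne_one hh hl

lemma A1_create : Pos (A 1 (FreeGroup.of 1)) := by
  rw [a1_eq, D_one]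
  have h2 : (FreeGroup.of (2:ℕ+)).toWord = [((2:ℕ+), true)] := FreeGroup.toWord_of 2
  exact sandwich two_ne_one two_ne_one (by rw [h2]; rfl) (by rw [h2]; rfl)

/-! ### The representation of `B∞` and the final assembly -/

lemma rels_hold : ∀ r ∈ braidRels, FreeGroup.lift E r = 1 := by
  intro r hr
  rcases hr with ⟨i, j, hij, rfl⟩ | ⟨i, rfl⟩
  · simp only [map_mul, map_inv, FreeGroup.lift_apply_of]
    rw [E_comm i j hij]
    group
  · simp only [map_mul, map_inv, FreeGroup.lift_apply_of]
    rw [E_braid i]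
    group

def rho : Binf →* MulAut F := PresentedGroup.toGroup rels_hold

lemma rho_gen (i : ℕ+) : rho (braidGen i) = E i := PresentedGroup.toGroup.of rels_hold

lemma key : ∀ w : List (ℕ+ × Bool), ((1, false) ∉ w) →
    (((1, true) ∈ w → Pos (rho (braidWordProd w) (FreeGroup.of 1))) ∧
     ((1, true) ∉ w → rho (braidWordProd w) (FreeGroup.of 1) = FreeGroup.of 1)) := by
  intro w
  induction w with
  | nil =>
    intro _
    constructor
    · intro h; simp at h
    · intro _
      have : braidWordProd [] = 1 := rfl
      rw [this, map_one]
      rfl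
  | cons l w ih =>
    intro hneg
    have hnegw : ((1:ℕ+), false) ∉ w := fun h => hneg (List.mem_cons_of_mem _ h)
    obtain ⟨ih1, ih2⟩ := ih hnegw
    have hprod : braidWordProd (l :: w) =
        (if l.2 then braidGen l.1 else (braidGen l.1)⁻¹) * braidWordProd w := by
      simp [braidWordProd]
    obtain ⟨i, b⟩ := l
    by_cases hi : i = 1
    · subst hi
      cases b
      · exact absurd (List.mem_cons_self) hneg
      · -- letter σ₁
        constructor
        · intro _
          rw [hprod]
          simp only [eq_self_iff_true, if_true, map_mul, MulAut.mul_apply, rho_gen]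
          rw [E_apply]
          by_cases hw : ((1:ℕ+), true) ∈ w
          · exact A1_track (ih1 hw)
          · rw [ih2 hw]
            exact A1_create
        · intro h
          exact absurd (List.mem_cons_self) h
    · have hmem : (((1:ℕ+), true) ∈ (i, b) :: w) ↔ (((1:ℕ+), true) ∈ w) := by
        constructor
        · intro h
          rcases List.mem_cons.mp h with h | h
          · exact absurd (congrArg Prod.fst h).symm hi
          · exact h
        · exact List.mem_cons_of_mem _
      rw [hprod]
      cases b
      · simp only [if_neg Bool.false_ne_true, map_mul, map_inv, MulAut.mul_apply, rho_gen]
        constructor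
        · intro h
          rw [show ((E i)⁻¹ : MulAut F) (rho (braidWordProd w) (FreeGroup.of 1))
              = B i (rho (braidWordProd w) (FreeGroup.of 1)) from rfl]
          exact B_track i hi (ih1 (hmem.mp h))
        · intro h
          rw [ih2 (fun hc => h (hmem.mpr hc))]
          rw [show ((E i)⁻¹ : MulAut F) (FreeGroup.of 1) = B i (FreeGroup.of 1) from rfl]
          exact B_fix i hi
      · simp only [eq_self_iff_true, if_true, map_mul, MulAut.mul_apply, rho_gen]
        constructor
        · intro h
          rw [E_apply]
          exact A_track i hi (ih1 (hmem.mp h))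
        · intro h
          rw [ih2 (fun hc => h (hmem.mpr hc)), E_apply]
          exact A_fix i hi

lemma final (w : List (ℕ+ × Bool)) (hpos : (1, true) ∈ w) (hneg : (1, false) ∉ w) :
    braidWordProd w ≠ 1 := by
  intro hcon
  have hP : Pos (rho (braidWordProd w) (FreeGroup.of 1)) := (key w hneg).1 hpos
  rw [hcon, map_one] at hP
  have : ((1 : MulAut F) (FreeGroup.of 1)) = FreeGroup.of 1 := rfl
  rw [this] at hP
  have := hP.2
  rw [FreeGroup.toWord_of] at this
  simp at this

end SigmaOneProof


/-- The σ₁-proposition: a braid word containing at least one `σ_1` and no `σ_1⁻¹`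
does not represent the identity of `B∞`. -/
theorem sigma_one_proposition (w : List (ℕ+ × Bool))
    (hpos : (1, true) ∈ w) (hneg : (1, false) ∉ w) :
    braidWordProd w ≠ 1 := by
  exact SigmaOneProof.final w hpos hneg
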